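/- Let F be a field, let n ≥ 2, fix k with 2 ≤ k ≤ n, and let 1 ≤ r_1 < r_2 < ⋯ < r_m and s_1, …, s_m be indices such that the index intervals {s_j, s_j+1, …, s_j+k−2} (for j = 1, …, m) are pairwise disjoint, are disjoint from {r_1, …, r_m}, and satisfy r_j < s_j and s_j + k − 2 ≤ n for each j. Then the matrices N_{r_1,s_1,k}, …, N_{r_m,s_m,k} ∈ M_n(F) are pairwise orthogonal (N_{r_i,s_i,k} N_{r_j,s_j,k} = 0 for i ≠ j), and consequently their sum N = ∑_{j=1}^m N_{r_j,s_j,k} satisfies N^k = 0. -/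
import Mathlib


/-- `Eunit F n a b` is the `n × n` matrix unit `E_{a,b}` over `F`, in **1-based**
indexing: it has a `1` in row `a`, column `b` (`1 ≤ a, b ≤ n`) and `0` elsewhere. -/
def Eunit (F : Type*) [Field F] (n a b : ℕ) : Matrix (Fin n) (Fin n) F :=
  Matrix.of fun i j => if (i : ℕ) + 1 = a ∧ (j : ℕ) + 1 = b then 1 else 0

/-- The matrix `N_{r,s,k} = E_{r,r} + E_{s,r} - E_{r,s+k-2} - ∑_{i=0}^{k-2} E_{s,s+i}
+ ∑_{i=0}^{k-3} E_{s+i+1,s+i} ∈ Mₙ(F)`, in 1-based indexing. -/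
def Nrsk (F : Type*) [Field F] (n r s k : ℕ) : Matrix (Fin n) (Fin n) F :=
  Eunit F n r r + Eunit F n s r - Eunit F n r (s + k - 2)
    - ∑ i ∈ Finset.range (k - 1), Eunit F n s (s + i)
    + ∑ i ∈ Finset.range (k - 2), Eunit F n (s + i + 1) (s + i)

open Matrix

namespace NrskAux

variable (F : Type*) [Field F] (n : ℕ)

/-- 1-based basis vector (zero when out of range). -/
def ee (c : ℕ) : Fin n → F := fun i => if (i : ℕ) + 1 = c then 1 else 0

variable {F n}

lemma sum_if_eq (s' j m : ℕ) :
    ∑ x ∈ Finset.range m, (if j = s' + x then (1 : F) else 0)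
      = if s' ≤ j ∧ j < s' + m then 1 else 0 := by
  induction m with
  | zero => rw [Finset.range_zero, Finset.sum_empty, if_neg (by omega)]
  | succ m ih =>
    rw [Finset.sum_range_succ, ih]
    split_ifs <;> first | ring1 | (exfalso; omega)

lemma sum_if_and (P : Prop) [Decidable P] (s' j m : ℕ) :
    ∑ x ∈ Finset.range m, (if P ∧ j = s' + x then (1 : F) else 0)
      = if P ∧ s' ≤ j ∧ j < s' + m then 1 else 0 := by
  by_cases hP : P
  · simp only [hP, true_and]; exact sum_if_eq s' j m
  · simp [hP]

lemma Nrsk_apply (r s k : ℕ) (i j : Fin n) :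
    Nrsk F n r s k i j =
      (if (i : ℕ) + 1 = r ∧ (j : ℕ) + 1 = r then 1 else 0)
      + (if (i : ℕ) + 1 = s ∧ (j : ℕ) + 1 = r then 1 else 0)
      - (if (i : ℕ) + 1 = r ∧ (j : ℕ) + 1 = s + k - 2 then 1 else 0)
      - (if (i : ℕ) + 1 = s ∧ s ≤ (j : ℕ) + 1 ∧ (j : ℕ) + 1 < s + (k - 1) then 1 else 0)
      + (if (i : ℕ) = (j : ℕ) + 1 ∧ s ≤ (j : ℕ) + 1 ∧ (j : ℕ) + 1 < s + (k - 2) then 1 else 0) := by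
  have hS1 : ∑ x ∈ Finset.range (k - 1), (if (i : ℕ) + 1 = s ∧ (j : ℕ) + 1 = s + x then (1 : F) else 0)
      = if (i : ℕ) + 1 = s ∧ s ≤ (j : ℕ) + 1 ∧ (j : ℕ) + 1 < s + (k - 1) then (1 : F) else 0 :=
    sum_if_and _ s ((j : ℕ) + 1) (k - 1)
  have hS2 : ∑ x ∈ Finset.range (k - 2), (if (i : ℕ) + 1 = s + x + 1 ∧ (j : ℕ) + 1 = s + x then (1 : F) else 0)
      = if (i : ℕ) = (j : ℕ) + 1 ∧ s ≤ (j : ℕ) + 1 ∧ (j : ℕ) + 1 < s + (k - 2) then (1 : F) else 0 := by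
    rw [Finset.sum_congr rfl (fun x _ => if_congr
      (show ((i : ℕ) + 1 = s + x + 1 ∧ (j : ℕ) + 1 = s + x) ↔
        ((i : ℕ) = (j : ℕ) + 1 ∧ (j : ℕ) + 1 = s + x) by omega) rfl rfl)]
    exact sum_if_and _ s ((j : ℕ) + 1) (k - 2)
  simp only [Nrsk, Matrix.add_apply, Matrix.sub_apply, Matrix.sum_apply,
    Eunit, Matrix.of_apply]
  rw [hS1, hS2]

section Single

lemma ee_out {c : ℕ} (hc : c = 0 ∨ n < c) : ee F n c = 0 := by
  funext i
  have := i.isLt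
  simp only [ee, Pi.zero_apply, ite_eq_right_iff]
  omega

lemma mulVec_ee (M : Matrix (Fin n) (Fin n) F) {c : ℕ} (h1 : 1 ≤ c) (h2 : c ≤ n) (i : Fin n) :
    (M *ᵥ ee F n c) i = M i ⟨c - 1, by omega⟩ := by
  simp only [Matrix.mulVec, dotProduct, ee, mul_ite, mul_one, mul_zero]
  rw [Finset.sum_eq_single (⟨c - 1, by omega⟩ : Fin n)]
  · rw [if_pos (by simp; omega)]
  · intro b _ hb
    rw [if_neg]
    intro h
    exact hb (by apply Fin.ext; simp; omega)
  · simp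

variable {k r s : ℕ} (hk : 2 ≤ k) (hr1 : 1 ≤ r) (hrs : r < s) (hsn : s + k - 2 ≤ n)

include hk hr1 hrs hsn

lemma colr : Nrsk F n r s k *ᵥ ee F n r = ee F n r + ee F n s := by
  funext i
  rw [mulVec_ee _ hr1 (by omega), Nrsk_apply]
  simp only [Pi.add_apply, ee]
  split_ifs <;> first | ring1 | (exfalso; omega)

lemma colsl {i : ℕ} (hi : i + 3 ≤ k) :
    Nrsk F n r s k *ᵥ ee F n (s + i) = ee F n (s + i + 1) - ee F n s := by
  funext a
  rw [mulVec_ee _ (by omega) (by omega), Nrsk_apply]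
  simp only [Pi.sub_apply, ee]
  split_ifs <;> first | ring1 | (exfalso; omega)

lemma colse : Nrsk F n r s k *ᵥ ee F n (s + (k - 2)) = -(ee F n r + ee F n s) := by
  funext a
  rw [mulVec_ee _ (by omega) (by omega), Nrsk_apply]
  simp only [Pi.neg_apply, Pi.add_apply, ee]
  split_ifs <;> first | ring1 | (exfalso; omega)

lemma colz {c : ℕ} (hc : ¬(c = r ∨ (s ≤ c ∧ c ≤ s + k - 2))) :
    Nrsk F n r s k *ᵥ ee F n c = 0 := by
  by_cases hcr : 1 ≤ c ∧ c ≤ n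
  · funext a
    rw [mulVec_ee _ hcr.1 hcr.2, Nrsk_apply]
    simp only [Pi.zero_apply]
    split_ifs <;> first | ring1 | (exfalso; omega)
  · rw [ee_out (by omega), Matrix.mulVec_zero]


lemma pstep {u : ℕ} (hu : u + 3 ≤ k) :
    Nrsk F n r s k *ᵥ (ee F n r + ee F n (s + u)) = ee F n r + ee F n (s + (u + 1)) := by
  rw [Matrix.mulVec_add, colr hk hr1 hrs hsn, colsl hk hr1 hrs hsn hu]
  abel

lemma lem_p (t : ℕ) {u : ℕ} (h : u + t ≤ k - 2) :
    Nrsk F n r s k ^ t *ᵥ (ee F n r + ee F n (s + u)) = ee F n r + ee F n (s + (u + t)) := by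
  induction t generalizing u with
  | zero => rw [pow_zero, Matrix.one_mulVec, Nat.add_zero]
  | succ t ih =>
    rw [pow_succ, ← Matrix.mulVec_mulVec, pstep hk hr1 hrs hsn (by omega),
      ih (by omega), show u + 1 + t = u + (t + 1) by omega]

lemma pkill : Nrsk F n r s k *ᵥ (ee F n r + ee F n (s + (k - 2))) = 0 := by
  rw [Matrix.mulVec_add, colr hk hr1 hrs hsn, colse hk hr1 hrs hsn]
  abel

lemma lem_pz (t : ℕ) {u : ℕ} (hu : u ≤ k - 2) (h : k - 1 ≤ u + t) (ht : 1 ≤ t) :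
    Nrsk F n r s k ^ t *ᵥ (ee F n r + ee F n (s + u)) = 0 := by
  rw [show t = (t - (k - 1 - u)) + 1 + (k - 2 - u) by omega, pow_add, pow_succ,
    ← Matrix.mulVec_mulVec, lem_p hk hr1 hrs hsn _ (by omega),
    show u + (k - 2 - u) = k - 2 by omega, ← Matrix.mulVec_mulVec,
    pkill hk hr1 hrs hsn, Matrix.mulVec_zero]

lemma lem_D (t : ℕ) {i : ℕ} (ht : 1 ≤ t) (h : i + t ≤ k - 2) :
    Nrsk F n r s k ^ t *ᵥ ee F n (s + i)
      = ee F n (s + (i + t)) - ee F n (s + (t - 1)) := by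
  induction t generalizing i with
  | zero => omega
  | succ t ih =>
    rcases Nat.eq_zero_or_pos t with h0 | h0
    · subst h0
      rw [pow_one]
      exact colsl hk hr1 hrs hsn (by omega)
    · rw [pow_succ, ← Matrix.mulVec_mulVec, colsl hk hr1 hrs hsn (by omega),
        Matrix.mulVec_sub, show (s : ℕ) + i + 1 = s + (i + 1) by omega,
        show (ee F n s : Fin n → F) = ee F n (s + 0) by rw [Nat.add_zero],
        ih h0 (by omega), ih h0 (by omega), show i + 1 + t = i + (t + 1) by omega,
        show 0 + t = t by omega]
      abel

lemma lem_E {i : ℕ} (hi : i ≤ k - 2) :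
    Nrsk F n r s k ^ (k - 1 - i) *ᵥ ee F n (s + i)
      = -(ee F n r + ee F n (s + (k - 2 - i))) := by
  rcases eq_or_lt_of_le hi with h | h
  · rw [h, show k - 1 - (k - 2) = 1 by omega, pow_one, show k - 2 - (k - 2) = 0 by omega,
      Nat.add_zero]
    exact colse hk hr1 hrs hsn
  · rw [show k - 1 - i = 1 + (k - 2 - i) by omega, pow_add, pow_one,
      ← Matrix.mulVec_mulVec, lem_D hk hr1 hrs hsn _ (by omega) (by omega),
      show i + (k - 2 - i) = k - 2 by omega, show (k - 2 - i) - 1 = k - 3 - i by omega,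
      Matrix.mulVec_sub, colse hk hr1 hrs hsn, colsl hk hr1 hrs hsn (by omega),
      show (s : ℕ) + (k - 3 - i) + 1 = s + (k - 2 - i) by omega]
    abel

lemma Nk_zero : Nrsk F n r s k ^ k = 0 := by
  have hsplit1 : Nrsk F n r s k ^ k = Nrsk F n r s k ^ (k - 1) * Nrsk F n r s k := by
    rw [← pow_succ, show k - 1 + 1 = k by omega]
  apply Matrix.ext
  intro a b
  have hb1 : 1 ≤ (b : ℕ) + 1 := by omega
  have hb2 : (b : ℕ) + 1 ≤ n := b.isLt
  have key : Nrsk F n r s k ^ k *ᵥ ee F n ((b : ℕ) + 1) = 0 := by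
    set c := (b : ℕ) + 1 with hc
    by_cases hc1 : c = r
    · rw [hc1, hsplit1, ← Matrix.mulVec_mulVec, colr hk hr1 hrs hsn,
        show (ee F n s : Fin n → F) = ee F n (s + 0) by rw [Nat.add_zero]]
      exact lem_pz hk hr1 hrs hsn (k - 1) (by omega) (by omega) (by omega)
    by_cases hc2 : s ≤ c ∧ c ≤ s + k - 2
    · have hsplit2 : Nrsk F n r s k ^ k
          = Nrsk F n r s k ^ ((c - s) + 1) * Nrsk F n r s k ^ (k - 1 - (c - s)) := by
        rw [← pow_add, show (c - s) + 1 + (k - 1 - (c - s)) = k by omega]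
      rw [show (ee F n c : Fin n → F) = ee F n (s + (c - s)) by rw [show s + (c - s) = c by omega],
        hsplit2, ← Matrix.mulVec_mulVec, lem_E hk hr1 hrs hsn (by omega), Matrix.mulVec_neg,
        lem_pz hk hr1 hrs hsn _ (by omega) (by omega) (by omega), neg_zero]
    · rw [hsplit1, ← Matrix.mulVec_mulVec, colz hk hr1 hrs hsn (by tauto), Matrix.mulVec_zero]
  calc (Nrsk F n r s k ^ k) a b
      = (Nrsk F n r s k ^ k *ᵥ ee F n ((b : ℕ) + 1)) a := by
        rw [mulVec_ee _ hb1 hb2]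
        exact congrArg _ (Fin.ext (by simp))
    _ = 0 := by rw [key]; rfl

end Single

lemma row_zero {k r s : ℕ} (hk : 2 ≤ k) {a : Fin n}
    (ha : ¬(((a : ℕ) + 1 = r) ∨ (s ≤ (a : ℕ) + 1 ∧ (a : ℕ) + 1 ≤ s + k - 2)))
    (j : Fin n) : Nrsk F n r s k a j = 0 := by
  rw [Nrsk_apply]
  split_ifs <;> first | ring1 | (exfalso; omega)

lemma col_zero {k r s : ℕ} (hk : 2 ≤ k) {j : Fin n}
    (hj : ¬(((j : ℕ) + 1 = r) ∨ (s ≤ (j : ℕ) + 1 ∧ (j : ℕ) + 1 ≤ s + k - 2)))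
    (a : Fin n) : Nrsk F n r s k a j = 0 := by
  rw [Nrsk_apply]
  split_ifs <;> first | ring1 | (exfalso; omega)

lemma orth {k : ℕ} (hk : 2 ≤ k) (r1 s1 r2 s2 : ℕ)
    (h1 : ∀ x, (s1 ≤ x ∧ x ≤ s1 + k - 2) → ¬(s2 ≤ x ∧ x ≤ s2 + k - 2))
    (h2 : ∀ x, (s1 ≤ x ∧ x ≤ s1 + k - 2) → x ≠ r2)
    (h3 : ∀ x, (s2 ≤ x ∧ x ≤ s2 + k - 2) → x ≠ r1)
    (h4 : r1 ≠ r2) :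
    Nrsk F n r1 s1 k * Nrsk F n r2 s2 k = 0 := by
  apply Matrix.ext
  intro a b
  rw [Matrix.mul_apply, Matrix.zero_apply]
  apply Finset.sum_eq_zero
  intro c _
  by_cases hc : ((c : ℕ) + 1 = r1) ∨ (s1 ≤ (c : ℕ) + 1 ∧ (c : ℕ) + 1 ≤ s1 + k - 2)
  · have hrow : ¬(((c : ℕ) + 1 = r2) ∨ (s2 ≤ (c : ℕ) + 1 ∧ (c : ℕ) + 1 ≤ s2 + k - 2)) := by
      rcases hc with h | h <;> rintro (h' | h')
      · exact h4 (h ▸ h')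
      · exact h3 _ h' (by omega)
      · exact h2 _ h (by omega)
      · exact h1 _ h h'
    rw [row_zero hk hrow, mul_zero]
  · rw [col_zero hk hc, zero_mul]

lemma sum_pow_orth {m : ℕ} (M : Fin m → Matrix (Fin n) (Fin n) F)
    (h : ∀ i j, i ≠ j → M i * M j = 0) (t : ℕ) (ht : 1 ≤ t) :
    (∑ j, M j) ^ t = ∑ j, (M j) ^ t := by
  induction t with
  | zero => omega
  | succ t ih =>
    rcases Nat.eq_zero_or_pos t with h0 | h0
    · subst h0; simp
    · rw [pow_succ, ih h0, Finset.sum_mul]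
      apply Finset.sum_congr rfl
      intro j _
      rw [Finset.mul_sum, Finset.sum_eq_single j]
      · rw [← pow_succ]
      · intro i _ hij
        rw [show t = (t - 1) + 1 by omega, pow_succ, mul_assoc, h j i (Ne.symm hij), mul_zero]
      · intro hj
        exact absurd (Finset.mem_univ j) hj

end NrskAux

/-- Let `n ≥ 2`, `2 ≤ k ≤ n`, and let `1 ≤ r₁ < ⋯ < r_m` and `s₁, …, s_m` be indices such
that the intervals `{sⱼ, …, sⱼ + k - 2}` are pairwise disjoint, disjoint from
`{r₁, …, r_m}`, and satisfy `rⱼ < sⱼ` and `sⱼ + k - 2 ≤ n` for each `j`. Then the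
matrices `N_{rⱼ,sⱼ,k}` are pairwise orthogonal, and consequently their sum `N` satisfies
`N ^ k = 0`. -/
theorem Nrsk_pairwise_orthogonal_sum_nilpotent
    (F : Type*) [Field F] (n k m : ℕ) (hn : 2 ≤ n) (hk : 2 ≤ k) (hkn : k ≤ n)
    (r s : Fin m → ℕ)
    (hr1 : ∀ j, 1 ≤ r j) (hrmono : StrictMono r)
    (hrs : ∀ j, r j < s j) (hsn : ∀ j, s j + k - 2 ≤ n)
    (hdisj : ∀ i j, i ≠ j →
      ∀ x, (s i ≤ x ∧ x ≤ s i + k - 2) → ¬ (s j ≤ x ∧ x ≤ s j + k - 2))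
    (hdisjr : ∀ i j, ∀ x, (s i ≤ x ∧ x ≤ s i + k - 2) → x ≠ r j) :
    (∀ i j, i ≠ j → Nrsk F n (r i) (s i) k * Nrsk F n (r j) (s j) k = 0) ∧
      (∑ j, Nrsk F n (r j) (s j) k) ^ k = 0 := by
  have horth : ∀ i j, i ≠ j → Nrsk F n (r i) (s i) k * Nrsk F n (r j) (s j) k = 0 := by
    intro i j hij
    exact NrskAux.orth hk (r i) (s i) (r j) (s j) (hdisj i j hij)
      (fun x hx => hdisjr i j x hx) (fun x hx => hdisjr j i x hx)
      (fun h => hij (hrmono.injective h))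
  refine ⟨horth, ?_⟩
  rw [NrskAux.sum_pow_orth _ horth k (by omega)]
  apply Finset.sum_eq_zero
  intro j _
  exact NrskAux.Nk_zero hk (hr1 j) (hrs j) (hsn j)
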